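/- Let K be a field and let H12 be an n1×m2 matrix, H21 an n2×m1 matrix, H22 an n2×m2 matrix over K. Let U20 be a matrix whose columns form a basis of the kernel of H21ᵀ (the left null space of H21), and let V10 be a matrix whose columns form a basis of the kernel of H12. Then the rank of the (n2+n1)×(m1+m2) block matrix [[H21, H22],[0, H12]] equals rank(U20ᵀ · H22 · V10) + rank(H21) + rank(H12). -/

import Mathlib

open Matrix

set_option maxHeartbeats 1000000 in
set_option synthInstance.maxHeartbeats 400000 in
/-- The rank of the block matrix [[H21, H22],[0, H12]] equals
rank(U20ᵀ · H22 · V10) + rank(H21) + rank(H12), where the columns of U20 form a basis of the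
left null space of H21 and the columns of V10 form a basis of the null space of H12. -/
theorem rank_fromBlocks_eq' {K : Type*} [Field K] {n1 n2 m1 m2 d1 d2 : ℕ}
    (H12 : Matrix (Fin n1) (Fin m2) K) (H21 : Matrix (Fin n2) (Fin m1) K)
    (H22 : Matrix (Fin n2) (Fin m2) K)
    (U20 : Matrix (Fin n2) (Fin d1) K) (V10 : Matrix (Fin m2) (Fin d2) K)
    (hU20li : LinearIndependent K (fun j => U20ᵀ j))
    (hU20span : Submodule.span K (Set.range (fun j => U20ᵀ j)) =
      LinearMap.ker (Matrix.mulVecLin H21ᵀ))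
    (hV10li : LinearIndependent K (fun j => V10ᵀ j))
    (hV10span : Submodule.span K (Set.range (fun j => V10ᵀ j)) =
      LinearMap.ker (Matrix.mulVecLin H12)) :
    (Matrix.fromBlocks H21 H22 (0 : Matrix (Fin n1) (Fin m1) K) H12).rank =
      (U20ᵀ * H22 * V10).rank + H21.rank + H12.rank := by
  classical
  open Module in
  set a := H21.mulVecLin with ha
  set c := H12.mulVecLin with hc
  set u := (U20ᵀ).mulVecLin with hu
  set M := U20ᵀ * H22 * V10 with hM
  -- dimension of kernels spanned by the given bases
  have hd1 : finrank K (LinearMap.ker (H21ᵀ.mulVecLin)) = d1 := by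
    rw [← hU20span]
    exact (finrank_span_eq_card hU20li).trans (Fintype.card_fin d1)
  have hd2 : finrank K (LinearMap.ker c) = d2 := by
    rw [hc, ← hV10span]
    exact (finrank_span_eq_card hV10li).trans (Fintype.card_fin d2)
  -- rank of U20ᵀ is d1
  have hrankU : (U20ᵀ).rank = d1 := by
    rw [Matrix.rank_transpose, Matrix.rank_eq_finrank_span_cols]
    exact (finrank_span_eq_card hU20li).trans (Fintype.card_fin d1)
  -- rank H21 + d1 = n2
  have hRN_H21T : H21ᵀ.rank + finrank K (LinearMap.ker (H21ᵀ.mulVecLin)) = n2 := by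
    have := LinearMap.finrank_range_add_finrank_ker (H21ᵀ.mulVecLin)
    rwa [Module.finrank_pi, Fintype.card_fin] at this
  have hRN_u : (U20ᵀ).rank + finrank K (LinearMap.ker u) = n2 := by
    have := LinearMap.finrank_range_add_finrank_ker u
    rwa [Module.finrank_pi, Fintype.card_fin] at this
  -- range H21 = ker U20ᵀ
  have hUH : U20ᵀ * H21 = 0 := by
    ext i j
    have hcol : U20ᵀ i ∈ LinearMap.ker (H21ᵀ.mulVecLin) := by
      rw [← hU20span]
      exact Submodule.subset_span ⟨i, rfl⟩
    have hcol' : H21ᵀ *ᵥ (U20ᵀ i) = 0 := hcol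
    have := congrFun hcol' j
    simp only [Matrix.mulVec, dotProduct, Matrix.transpose_apply,
      Pi.zero_apply] at this ⊢
    simp only [Matrix.mul_apply, Matrix.transpose_apply, Matrix.zero_apply]
    rw [← this]
    exact Finset.sum_congr rfl fun k _ => mul_comm _ _
  have hrange_a : LinearMap.range a = LinearMap.ker u := by
    apply Submodule.eq_of_le_of_finrank_eq
    · rintro _ ⟨x, rfl⟩
      show U20ᵀ *ᵥ (H21 *ᵥ x) = 0
      rw [Matrix.mulVec_mulVec, hUH, Matrix.zero_mulVec]
    · have h1 : finrank K (LinearMap.range a) = H21.rank := rfl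
      have h2 : H21ᵀ.rank = H21.rank := Matrix.rank_transpose H21
      omega
  -- injectivity of V10
  have hVinj : Function.Injective V10.mulVecLin := by
    have := Matrix.mulVec_injective_iff.mpr hV10li
    exact fun x y h => this h
  have hrangeV : LinearMap.range V10.mulVecLin = LinearMap.ker c := by
    rw [Matrix.range_mulVecLin, hc, ← hV10span]; rfl
  -- the subspace W
  set W : Submodule K (Fin m2 → K) :=
    LinearMap.ker c ⊓ Submodule.comap H22.mulVecLin (LinearMap.range a) with hW
  have hWmap : W = Submodule.map V10.mulVecLin (LinearMap.ker M.mulVecLin) := by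
    apply le_antisymm
    · rintro y ⟨hy1, hy2⟩
      have : y ∈ LinearMap.range V10.mulVecLin := hrangeV ▸ hy1
      obtain ⟨t, rfl⟩ := this
      refine ⟨t, ?_, rfl⟩
      have hy2' : H22 *ᵥ (V10 *ᵥ t) ∈ LinearMap.ker u := hrange_a ▸ hy2
      have : U20ᵀ *ᵥ (H22 *ᵥ (V10 *ᵥ t)) = 0 := hy2'
      show M *ᵥ t = 0
      rw [hM, ← Matrix.mulVec_mulVec, ← Matrix.mulVec_mulVec]
      exact this
    · rintro _ ⟨t, ht, rfl⟩
      have ht' : M *ᵥ t = 0 := ht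
      constructor
      · rw [← hrangeV]; exact ⟨t, rfl⟩
      · show H22 *ᵥ (V10 *ᵥ t) ∈ LinearMap.range a
        rw [hrange_a]
        show U20ᵀ *ᵥ (H22 *ᵥ (V10 *ᵥ t)) = 0
        rw [Matrix.mulVec_mulVec, Matrix.mulVec_mulVec, ← hM]
        exact ht'
  have hfinW : finrank K W = finrank K (LinearMap.ker M.mulVecLin) := by
    rw [hWmap]
    exact ((LinearMap.ker M.mulVecLin).equivMapOfInjective _ hVinj).finrank_eq.symm
  -- rank-nullity for M
  have hRN_M : M.rank + finrank K (LinearMap.ker M.mulVecLin) = d2 := by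
    have := LinearMap.finrank_range_add_finrank_ker M.mulVecLin
    rwa [Module.finrank_pi, Fintype.card_fin] at this
  -- rank-nullity for a and c
  have hRN_a : H21.rank + finrank K (LinearMap.ker a) = m1 := by
    have := LinearMap.finrank_range_add_finrank_ker a
    rwa [Module.finrank_pi, Fintype.card_fin] at this
  have hRN_c : H12.rank + finrank K (LinearMap.ker c) = m2 := by
    have := LinearMap.finrank_range_add_finrank_ker c
    rwa [Module.finrank_pi, Fintype.card_fin] at this
  -- the big block map
  set F := (Matrix.fromBlocks H21 H22 (0 : Matrix (Fin n1) (Fin m1) K) H12).mulVecLin with hF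
  have memkerF : ∀ z : Fin m1 ⊕ Fin m2 → K, z ∈ LinearMap.ker F ↔
      (H21 *ᵥ (z ∘ Sum.inl) + H22 *ᵥ (z ∘ Sum.inr) = 0 ∧ H12 *ᵥ (z ∘ Sum.inr) = 0) := by
    intro z
    rw [LinearMap.mem_ker, hF, Matrix.mulVecLin_apply, Matrix.fromBlocks_mulVec,
      Matrix.zero_mulVec, zero_add]
    constructor
    · intro h
      constructor
      · funext i; exact congrFun h (Sum.inl i)
      · funext i; exact congrFun h (Sum.inr i)
    · rintro ⟨h1, h2⟩
      funext i
      cases i with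
      | inl i => exact congrFun h1 i
      | inr i => exact congrFun h2 i
  have hRN_F : (Matrix.fromBlocks H21 H22 (0 : Matrix (Fin n1) (Fin m1) K) H12).rank +
      finrank K (LinearMap.ker F) = m1 + m2 := by
    have := LinearMap.finrank_range_add_finrank_ker F
    rwa [Module.finrank_pi, Fintype.card_sum, Fintype.card_fin, Fintype.card_fin] at this
  -- the projection π : ker F → K^{m2}
  set π : ↥(LinearMap.ker F) →ₗ[K] (Fin m2 → K) :=
    (LinearMap.funLeft K K Sum.inr).comp (LinearMap.ker F).subtype with hπ
  have hrangeπ : LinearMap.range π = W := by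
    apply le_antisymm
    · rintro _ ⟨⟨z, hz⟩, rfl⟩
      obtain ⟨h1, h2⟩ := (memkerF z).mp hz
      refine ⟨h2, ?_⟩
      show H22 *ᵥ (z ∘ Sum.inr) ∈ LinearMap.range a
      refine ⟨-(z ∘ Sum.inl), ?_⟩
      show H21 *ᵥ (-(z ∘ Sum.inl)) = H22 *ᵥ (z ∘ Sum.inr)
      rw [Matrix.mulVec_neg]
      exact neg_eq_of_add_eq_zero_right h1
    · rintro y ⟨hy1, hy2⟩
      obtain ⟨x, hx⟩ := hy2
      have hx' : H21 *ᵥ x = H22 *ᵥ y := hx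
      have hz : Sum.elim (-x) y ∈ LinearMap.ker F := by
        rw [memkerF]
        refine ⟨?_, hy1⟩
        show H21 *ᵥ (-x) + H22 *ᵥ y = 0
        rw [Matrix.mulVec_neg, hx', neg_add_cancel]
      exact ⟨⟨Sum.elim (-x) y, hz⟩, rfl⟩
  have hRN_pi : finrank K W + finrank K (LinearMap.ker π) = finrank K (LinearMap.ker F) := by
    have := LinearMap.finrank_range_add_finrank_ker π
    rwa [hrangeπ] at this
  -- ker π ≃ ker a via restriction to the first block
  set ρ : ↥(LinearMap.ker π) →ₗ[K] (Fin m1 → K) :=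
    ((LinearMap.funLeft K K Sum.inl).comp (LinearMap.ker F).subtype).comp
      (LinearMap.ker π).subtype with hρ
  have hkerρ : LinearMap.ker ρ = ⊥ := by
    rw [LinearMap.ker_eq_bot']
    rintro ⟨⟨z, hz⟩, hz2⟩ h
    have h2 : z ∘ Sum.inr = 0 := hz2
    have h1 : z ∘ Sum.inl = 0 := h
    have : z = 0 := by
      funext i
      cases i with
      | inl i => exact congrFun h1 i
      | inr i => exact congrFun h2 i
    ext
    simp [this]
  have hrangeρ : LinearMap.range ρ = LinearMap.ker a := by
    apply le_antisymm
    · rintro _ ⟨⟨⟨z, hz⟩, hz2⟩, rfl⟩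
      obtain ⟨h1, h2⟩ := (memkerF z).mp hz
      have h3 : z ∘ Sum.inr = 0 := hz2
      show H21 *ᵥ (z ∘ Sum.inl) = 0
      rw [h3, Matrix.mulVec_zero, add_zero] at h1
      exact h1
    · intro x hx
      have hx' : H21 *ᵥ x = 0 := hx
      have hz : Sum.elim x (0 : Fin m2 → K) ∈ LinearMap.ker F := by
        rw [memkerF]
        constructor
        · show H21 *ᵥ x + H22 *ᵥ (0 : Fin m2 → K) = 0
          rw [hx', Matrix.mulVec_zero, add_zero]
        · show H12 *ᵥ (0 : Fin m2 → K) = 0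
          exact Matrix.mulVec_zero _
      have hzπ : (⟨Sum.elim x 0, hz⟩ : ↥(LinearMap.ker F)) ∈ LinearMap.ker π := rfl
      exact ⟨⟨⟨Sum.elim x 0, hz⟩, hzπ⟩, rfl⟩
  have hρinj : Function.Injective ρ := by
    intro x y hxy
    have := LinearMap.ker_eq_bot'.mp hkerρ (x - y) (by rw [LinearMap.map_sub ρ x y, hxy, sub_self])
    exact sub_eq_zero.mp this
  have hkerπ : finrank K ↥(LinearMap.ker a) = finrank K ↥(LinearMap.ker π) := by
    have h := LinearMap.finrank_range_of_inj hρinj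
    rw [hrangeρ] at h
    exact h
  omega
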